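/- For α, β > 0 with αβ = 1/(2n) for a positive integer n, the function B(γ) = 2n · Σ_{k,l∈ℤ} exp(-(π/2)(k²/β² + (l/α + kγ/β)²)) attains its global maximum over γ ∈ ℝ exactly at the points γ ∈ (β/α)·ℤ. -/

import Mathlib

open Real

noncomputable def thetaR (a x : ℝ) : ℝ := ∑' l : ℤ, Real.exp (-π * a * ((l : ℝ) + x) ^ 2)

lemma thetaR_summable {a : ℝ} (ha : 0 < a) (x : ℝ) :
    Summable fun l : ℤ => Real.exp (-π * a * ((l : ℝ) + x) ^ 2) := by
  have h : Summable fun n : ℤ => jacobiTheta₂_term n (a * x * Complex.I) (a * Complex.I) :=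
    (summable_jacobiTheta₂_term_iff _ _).mpr (by simpa using ha)
  have h2 := (summable_norm_iff.mpr h).mul_left (Real.exp (-π * a * x ^ 2))
  refine h2.congr fun l => ?_
  rw [norm_jacobiTheta₂_term, ← Real.exp_add]
  congr 1
  simp only [Complex.mul_im, Complex.I_im, Complex.I_re, Complex.ofReal_re, Complex.ofReal_im,
    Complex.mul_re]
  ring

lemma thetaR_transform {a : ℝ} (ha : 0 < a) (x : ℝ) :
    thetaR a x = (1 / Real.sqrt a) *
      ∑' n : ℤ, Real.exp (-π / a * (n : ℝ) ^ 2) * Real.cos (2 * π * n * x) := by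
  have ha' : (0:ℝ) < a⁻¹ := inv_pos.mpr ha
  have hs : (0:ℝ) < Real.sqrt a := Real.sqrt_pos.mpr ha
  have hre : 0 < ((a : ℂ)⁻¹).re := by
    rw [← Complex.ofReal_inv, Complex.ofReal_re]; exact ha'
  have key := Complex.tsum_exp_neg_quadratic hre (-Complex.I * x)
  have hI : Complex.I * (-Complex.I * (x:ℂ)) = (x:ℂ) := by
    rw [neg_mul, mul_neg, ← mul_assoc, Complex.I_mul_I]; ring
  have h1 : ∀ n : ℤ, Complex.exp (-(π:ℂ) / ((a:ℂ))⁻¹ * ((n:ℂ) + Complex.I * (-Complex.I * (x:ℂ))) ^ 2)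
      = ((Real.exp (-π * a * ((n:ℝ) + x) ^ 2) : ℝ) : ℂ) := by
    intro n
    rw [hI, Complex.ofReal_exp, div_eq_mul_inv, inv_inv]
    push_cast
    ring_nf
  have h2 : ∀ n : ℤ, (-(π:ℂ) * ((a:ℂ))⁻¹ * (n:ℂ) ^ 2 + 2 * (π:ℂ) * (-Complex.I * (x:ℂ)) * (n:ℂ))
      = ((-π / a * (n:ℝ)^2 : ℝ) : ℂ) + ((-(2 * π * n * x) : ℝ) : ℂ) * Complex.I := by
    intro n; push_cast; field_simp
  have hsum : Summable fun n : ℤ =>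
      Complex.exp (-(π:ℂ) * ((a:ℂ))⁻¹ * (n:ℂ) ^ 2 + 2 * (π:ℂ) * (-Complex.I * (x:ℂ)) * (n:ℂ)) := by
    apply Summable.of_norm
    refine (thetaR_summable ha' 0).congr fun n => ?_
    rw [h2 n, Complex.norm_exp]
    congr 1
    simp only [Complex.add_re, Complex.ofReal_re, Complex.mul_re, Complex.I_re, Complex.I_im,
      Complex.ofReal_im]
    rw [div_eq_mul_inv]
    ring
  have h3 : ∑' n : ℤ, Complex.exp (-(π:ℂ) / ((a:ℂ))⁻¹ * ((n:ℂ) + Complex.I * (-Complex.I * (x:ℂ))) ^ 2)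
      = ((thetaR a x : ℝ) : ℂ) := by
    rw [thetaR, Complex.ofReal_tsum]
    exact tsum_congr h1
  have h4 : (1:ℂ) / ((a:ℂ))⁻¹ ^ ((1:ℂ)/2) = ((Real.sqrt a : ℝ) : ℂ) := by
    have : ((a:ℂ))⁻¹ ^ ((1:ℂ)/2) = (((Real.sqrt a)⁻¹ : ℝ) : ℂ) := by
      rw [← Complex.ofReal_inv, (by norm_num : ((1:ℂ)/2) = ((1/2 : ℝ) : ℂ)),
        ← Complex.ofReal_cpow ha'.le]
      rw [← Real.sqrt_eq_rpow, Real.sqrt_inv]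
    rw [this, one_div, ← Complex.ofReal_inv, inv_inv]
  rw [h3, h4] at key
  have hre2 := congrArg Complex.re key
  rw [Complex.re_tsum hsum, ← Complex.ofReal_mul, Complex.ofReal_re] at hre2
  have hterm : ∀ n : ℤ,
      (Complex.exp (-(π:ℂ) * ((a:ℂ))⁻¹ * (n:ℂ) ^ 2 + 2 * (π:ℂ) * (-Complex.I * (x:ℂ)) * (n:ℂ))).re
      = Real.exp (-π / a * (n:ℝ)^2) * Real.cos (2 * π * n * x) := by
    intro n
    rw [h2 n, Complex.exp_re]
    simp only [Complex.add_re, Complex.ofReal_re, Complex.mul_re, Complex.I_re, Complex.I_im,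
      Complex.ofReal_im, Complex.add_im, Complex.mul_im]
    norm_num
  rw [tsum_congr hterm] at hre2
  rw [one_div, eq_comm, inv_mul_eq_iff_eq_mul₀ hs.ne', ← hre2]

lemma thetaR_nonneg (a x : ℝ) : 0 ≤ thetaR a x :=
  tsum_nonneg fun _ => (Real.exp_pos _).le

lemma cos_sum_summable {a : ℝ} (ha : 0 < a) (x : ℝ) :
    Summable fun n : ℤ => Real.exp (-π / a * (n:ℝ)^2) * Real.cos (2*π*n*x) := by
  have h0' : Summable fun n : ℤ => Real.exp (-π / a * (n:ℝ)^2) :=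
    (thetaR_summable (inv_pos.mpr ha) 0).congr fun n => by
      rw [add_zero, div_eq_mul_inv]
  refine summable_abs_iff.mp (h0'.of_nonneg_of_le (fun n => abs_nonneg _) fun n => ?_)
  rw [abs_mul, abs_of_pos (Real.exp_pos _)]
  calc Real.exp (-π / a * (n:ℝ)^2) * |Real.cos (2*π*n*x)|
      ≤ Real.exp (-π / a * (n:ℝ)^2) * 1 :=
        mul_le_mul_of_nonneg_left (Real.abs_cos_le_one _) (Real.exp_pos _).le
    _ = _ := mul_one _

lemma thetaR_le {a : ℝ} (ha : 0 < a) (x : ℝ) : thetaR a x ≤ thetaR a 0 := by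
  rw [thetaR_transform ha x, thetaR_transform ha 0]
  refine mul_le_mul_of_nonneg_left
    (Summable.tsum_le_tsum (fun n => ?_) (cos_sum_summable ha x) (cos_sum_summable ha 0))
    (by positivity)
  refine mul_le_mul_of_nonneg_left ?_ (Real.exp_pos _).le
  rw [mul_zero, Real.cos_zero]
  exact Real.cos_le_one _

lemma thetaR_lt {a : ℝ} (ha : 0 < a) {x : ℝ} (hx : ∀ m : ℤ, x ≠ (m:ℝ)) :
    thetaR a x < thetaR a 0 := by
  rw [thetaR_transform ha x, thetaR_transform ha 0]
  have hs : (0:ℝ) < 1 / Real.sqrt a := by positivity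
  refine mul_lt_mul_of_pos_left ?_ hs
  refine Summable.tsum_lt_tsum (i := (1:ℤ)) (fun n => ?_)
    ?_ (cos_sum_summable ha x) (cos_sum_summable ha 0)
  · refine mul_le_mul_of_nonneg_left ?_ (Real.exp_pos _).le
    rw [mul_zero, Real.cos_zero]
    exact Real.cos_le_one _
  · refine mul_lt_mul_of_pos_left ?_ (Real.exp_pos _)
    rw [mul_zero, Real.cos_zero]
    refine lt_of_le_of_ne (Real.cos_le_one _) fun h => ?_
    obtain ⟨m, hm⟩ := (Real.cos_eq_one_iff _).mp h
    push_cast at hm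
    refine hx m (mul_left_cancel₀ (a := 2 * π) (by positivity) ?_)
    linarith

lemma thetaR_int {a : ℝ} (m : ℤ) : thetaR a (m:ℝ) = thetaR a 0 := by
  have h := (Equiv.addRight m).tsum_eq (fun l : ℤ => Real.exp (-π * a * ((l:ℝ) + 0) ^ 2))
  rw [thetaR, thetaR, ← h]
  refine tsum_congr fun l => ?_
  simp only [Equiv.coe_addRight]
  push_cast
  ring_nf

theorem upper_bound_max_iff_rectangular (n : ℕ) (hn : 0 < n) (α β : ℝ)
    (hα : 0 < α) (hβ : 0 < β) (hαβ : α * β = 1 / (2 * n))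
    (B : ℝ → ℝ)
    (hB : ∀ γ : ℝ, B γ = (2 * n) * ∑' p : ℤ × ℤ,
      Real.exp (-(π / 2) * (((p.1 : ℝ) / β) ^ 2 + ((p.2 : ℝ) / α + (p.1 : ℝ) * γ / β) ^ 2)))
    (γ : ℝ) :
    B γ ≤ B 0 ∧ (B γ = B 0 ↔ ∃ m : ℤ, γ = (β / α) * m) := by
  have hα' : α ≠ 0 := hα.ne'
  have hβ' : β ≠ 0 := hβ.ne'
  set a0 : ℝ := 1 / (2 * α ^ 2) with ha0def
  have ha0 : 0 < a0 := by positivity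
  set c : ℤ → ℝ := fun k => Real.exp (-(π / 2) * ((k:ℝ) / β) ^ 2) with hcdef
  have hcpos : ∀ k, 0 < c k := fun k => Real.exp_pos _
  have hc : Summable c := by
    refine (thetaR_summable (a := 1 / (2 * β ^ 2)) (by positivity) 0).congr fun k => ?_
    congr 1
    field_simp
    ring
  have hterm : ∀ γ' : ℝ, ∀ k l : ℤ,
      Real.exp (-(π / 2) * (((k:ℝ) / β) ^ 2 + ((l:ℝ) / α + (k:ℝ) * γ' / β) ^ 2))
      = c k * Real.exp (-π * a0 * ((l:ℝ) + α * k * γ' / β) ^ 2) := by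
    intro γ' k l
    rw [hcdef, ← Real.exp_add]
    congr 1
    rw [ha0def]
    field_simp
    ring
  have houter : ∀ γ' : ℝ, Summable fun k : ℤ => c k * thetaR a0 (α * k * γ' / β) := by
    intro γ'
    refine (hc.mul_right (thetaR a0 0)).of_nonneg_of_le
      (fun k => mul_nonneg (hcpos k).le (thetaR_nonneg _ _)) fun k => ?_
    exact mul_le_mul_of_nonneg_left (thetaR_le ha0 _) (hcpos k).le
  have key : ∀ γ' : ℝ, B γ' = (2 * n) * ∑' k : ℤ, c k * thetaR a0 (α * k * γ' / β) := by
    intro γ'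
    rw [hB γ']
    congr 1
    have hinner : ∀ k : ℤ, Summable fun l : ℤ =>
        Real.exp (-(π / 2) * (((k:ℝ) / β) ^ 2 + ((l:ℝ) / α + (k:ℝ) * γ' / β) ^ 2)) := by
      intro k
      exact ((thetaR_summable ha0 (α * k * γ' / β)).mul_left (c k)).congr
        fun l => (hterm γ' k l).symm
    have hF : Summable fun p : ℤ × ℤ =>
        Real.exp (-(π / 2) * (((p.1:ℝ) / β) ^ 2 + ((p.2:ℝ) / α + (p.1:ℝ) * γ' / β) ^ 2)) := by
      refine (summable_prod_of_nonneg fun p => (Real.exp_pos _).le).mpr ⟨hinner, ?_⟩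
      refine (houter γ').congr fun k => ?_
      rw [thetaR, ← tsum_mul_left]
      exact (tsum_congr fun l => (hterm γ' k l)).symm
    rw [Summable.tsum_prod' hF hinner]
    refine tsum_congr fun k => ?_
    rw [thetaR, ← tsum_mul_left]
    exact tsum_congr fun l => hterm γ' k l
  have hzero : ∀ k : ℤ, α * k * (0:ℝ) / β = 0 := fun k => by ring
  have key0 : B 0 = (2 * n) * ∑' k : ℤ, c k * thetaR a0 0 := by
    rw [key 0]
    congr 1
    exact tsum_congr fun k => by rw [hzero k]
  have hn2 : (0:ℝ) < 2 * n := by positivity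
  have hle : B γ ≤ B 0 := by
    rw [key γ, key0]
    refine mul_le_mul_of_nonneg_left
      (Summable.tsum_le_tsum (fun k => ?_) (houter γ) (hc.mul_right _)) hn2.le
    exact mul_le_mul_of_nonneg_left (thetaR_le ha0 _) (hcpos k).le
  refine ⟨hle, ?_, ?_⟩
  · intro heq
    by_contra hcon
    push_neg at hcon
    have hx1 : ∀ m : ℤ, α * (1:ℤ) * γ / β ≠ (m:ℝ) := by
      intro m hm
      refine hcon m ?_
      push_cast at hm
      field_simp at hm
      field_simp
      linarith
    have hstrict : B γ < B 0 := by
      rw [key γ, key0]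
      refine mul_lt_mul_of_pos_left
        (Summable.tsum_lt_tsum (i := (1:ℤ)) (fun k =>
          mul_le_mul_of_nonneg_left (thetaR_le ha0 _) (hcpos k).le)
          (mul_lt_mul_of_pos_left (thetaR_lt ha0 hx1) (hcpos 1))
          (houter γ) (hc.mul_right _)) hn2
    exact absurd heq hstrict.ne
  · rintro ⟨m, rfl⟩
    rw [key _, key0]
    congr 1
    refine tsum_congr fun k => ?_
    congr 1
    have hx : α * k * (β / α * m) / β = ((k * m : ℤ) : ℝ) := by
      push_cast
      field_simp
    rw [hx, thetaR_int]
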